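/- Let V : E → E be a differentiable vector field and f : E → ℝ a function such that curl V (x) = f x • V x for all x (V is a Beltrami field). Then for every x : E, fderiv ℝ V x (V x) = (1/2 : ℝ) • gradient (fun y => ‖V y‖^2) x. In particular, V is the velocity field of a stationary motion of an ideal incompressible fluid, with pressure p = −½‖V‖². -/

import Mathlib

open MeasureTheory RealInnerProductSpace

noncomputable section

abbrev E : Type := EuclideanSpace ℝ (Fin 3)

/-- The `i`-th standard basis vector of `E`. -/
def e (i : Fin 3) : E := EuclideanSpace.single i 1

/-- The curl (vorticity) of a vector field on `E`. -/
def curl (X : E → E) (x : E) : E :=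
  (WithLp.equiv 2 (Fin 3 → ℝ)).symm
    ![fderiv ℝ X x (e 1) 2 - fderiv ℝ X x (e 2) 1,
      fderiv ℝ X x (e 2) 0 - fderiv ℝ X x (e 0) 2,
      fderiv ℝ X x (e 0) 1 - fderiv ℝ X x (e 1) 0]

/-- The divergence of a vector field on `E`. -/
def div (X : E → E) (x : E) : ℝ := ∑ i, fderiv ℝ X x (e i) i

/-- The cross product on `E`. -/
def cross (a b : E) : E :=
  (WithLp.equiv 2 (Fin 3 → ℝ)).symm
    ![a 1 * b 2 - a 2 * b 1,
      a 2 * b 0 - a 0 * b 2,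
      a 0 * b 1 - a 1 * b 0]

infixl:74 " ×₃ " => cross

/-- A Beltrami field (`curl V = f • V`) is a stationary solution of the Euler
equations with pressure `p = −½‖V‖²`: `∇_V V = ½ grad ‖V‖²`. -/
theorem beltrami_stationary (V : E → E) (f : E → ℝ) (hV : Differentiable ℝ V)
    (hBeltrami : ∀ x, curl V x = f x • V x) (x : E) :
    fderiv ℝ V x (V x) = (1/2 : ℝ) • gradient (fun y => ‖V y‖^2) x := by
  have hsq : HasFDerivAt (fun y => ‖V y‖^2 : E → ℝ)
      ((fderivInnerCLM ℝ (V x, V x)).comp ((fderiv ℝ V x).prod (fderiv ℝ V x))) x := by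
    have h := (hV x).hasFDerivAt.inner ℝ (hV x).hasFDerivAt
    simpa only [real_inner_self_eq_norm_sq] using h
  have hgrad : ∀ v : E, ⟪gradient (fun y => ‖V y‖^2) x, v⟫ =
      2 * ⟪V x, fderiv ℝ V x v⟫ := by
    intro v
    rw [gradient, InnerProductSpace.toDual_symm_apply, hsq.fderiv]
    simp only [ContinuousLinearMap.comp_apply, ContinuousLinearMap.prod_apply,
      fderivInnerCLM_apply]
    rw [real_inner_comm ((fderiv ℝ V x) v) (V x)]
    ring
  have hdecomp : V x = ∑ j : Fin 3, V x j • e j := by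
    ext i
    simp [e, EuclideanSpace.single_apply, Fin.sum_univ_three]
    fin_cases i <;> simp
  have hB : ∀ j, curl V x j = f x * V x j := by
    intro j; rw [hBeltrami]; rfl
  have h0 : fderiv ℝ V x (e 1) 2 - fderiv ℝ V x (e 2) 1 = f x * V x 0 := hB 0
  have h1 : fderiv ℝ V x (e 2) 0 - fderiv ℝ V x (e 0) 2 = f x * V x 1 := hB 1
  have h2 : fderiv ℝ V x (e 0) 1 - fderiv ℝ V x (e 1) 0 = f x * V x 2 := hB 2
  have hL : ∀ i, fderiv ℝ V x (V x) i = ∑ j : Fin 3, V x j * fderiv ℝ V x (e j) i := by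
    intro i
    conv_lhs => rw [hdecomp]
    rw [map_sum]
    simp [Fin.sum_univ_three]
  have hR : ∀ i, ((1/2 : ℝ) • gradient (fun y => ‖V y‖^2) x) i
      = ∑ j : Fin 3, V x j * fderiv ℝ V x (e i) j := by
    intro i
    have hg : gradient (fun y => ‖V y‖^2) x i = 2 * ⟪V x, fderiv ℝ V x (e i)⟫ := by
      rw [← hgrad (e i)]
      rw [e, EuclideanSpace.inner_single_right]
      simp
    have h' : ((1/2 : ℝ) • gradient (fun y => ‖V y‖^2) x) i
        = (1/2 : ℝ) * gradient (fun y => ‖V y‖^2) x i := rfl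
    rw [h', hg, PiLp.inner_apply]
    simp only [RCLike.inner_apply, conj_trivial, Fin.sum_univ_three]
    ring
  ext i
  fin_cases i
  · show fderiv ℝ V x (V x) 0 = ((1/2 : ℝ) • gradient (fun y => ‖V y‖^2) x) 0
    rw [hL 0, hR 0]
    simp only [Fin.sum_univ_three]
    linear_combination (-(V x 1)) * h2 + (V x 2) * h1
  · show fderiv ℝ V x (V x) 1 = ((1/2 : ℝ) • gradient (fun y => ‖V y‖^2) x) 1
    rw [hL 1, hR 1]
    simp only [Fin.sum_univ_three]
    linear_combination (V x 0) * h2 - (V x 2) * h0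
  · show fderiv ℝ V x (V x) 2 = ((1/2 : ℝ) • gradient (fun y => ‖V y‖^2) x) 2
    rw [hL 2, hR 2]
    simp only [Fin.sum_univ_three]
    linear_combination (-(V x 0)) * h1 + (V x 1) * h0
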